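/- Let {x_n} and {y_n} be sequences (with values in any set) such that {x_n} is periodic with period p ≥ 1, {y_n} is periodic with period q ≥ 1, and x_n = y_n for all 1 ≤ n ≤ p + q. Then x_n = y_n for all n ≥ 1, and the sequence {x_n} is periodic with period gcd(p, q). -/
import Mathlib


/-- A sequence `x` (indexed by positive integers) has period `p` if
`x (n + p) = x n` for all `n ≥ 1`. -/
def SeqPeriod {α : Type*} (x : ℕ → α) (p : ℕ) : Prop :=
  ∀ n : ℕ, 1 ≤ n → x (n + p) = x n

lemma seqPeriod_mul {α : Type*} {x : ℕ → α} {p : ℕ} (h : SeqPeriod x p) (k : ℕ) :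
    SeqPeriod x (k * p) := by
  induction k with
  | zero => intro n hn; simp
  | succ k ih =>
    intro n hn
    have h1 : n + (k + 1) * p = (n + k * p) + p := by ring
    rw [h1, h (n + k * p) (le_trans hn (Nat.le_add_right _ _)), ih n hn]

lemma seqPeriod_gcd {α : Type*} (x : ℕ → α) :
    ∀ p q : ℕ, SeqPeriod x p → SeqPeriod x q → SeqPeriod x (Nat.gcd p q) := by
  intro p q
  induction p, q using Nat.gcd.induction with
  | H0 q => intro _ hq; simpa using hq
  | H1 p q hp ih =>
    intro hxp hxq
    rw [Nat.gcd_rec]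
    refine ih ?_ hxp
    -- need SeqPeriod x (q % p)
    intro n hn
    have hmul : SeqPeriod x ((q / p) * p) := seqPeriod_mul hxp _
    have h1 : n + q = (n + q % p) + (q / p) * p := by
      rw [Nat.add_assoc]
      congr 1
      rw [Nat.mod_add_div']
    have h2 := hmul (n + q % p) (le_trans hn (Nat.le_add_right _ _))
    have h3 := hxq n hn
    rw [← h1, h3] at h2
    exact h2.symm

theorem stmt0 {α : Type*} (x y : ℕ → α) (p q : ℕ)
    (hp : 1 ≤ p) (hq : 1 ≤ q)
    (hxp : SeqPeriod x p) (hyq : SeqPeriod y q)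
    (hxy : ∀ n : ℕ, 1 ≤ n → n ≤ p + q → x n = y n) :
    (∀ n : ℕ, 1 ≤ n → x n = y n) ∧ SeqPeriod x (Nat.gcd p q) := by
  have key : ∀ n : ℕ, 1 ≤ n → x n = y n := by
    intro n
    induction n using Nat.strong_induction_on with
    | _ n ih =>
      intro hn
      by_cases hle : n ≤ p + q
      · exact hxy n hn hle
      · push_neg at hle
        -- n ≥ p + q + 1
        have hnpq : p + q + 1 ≤ n := hle
        have h1 : 1 ≤ n - p - q := by omega
        have e1 : x n = x (n - p) := by
          have := hxp (n - p) (by omega)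
          rw [Nat.sub_add_cancel (by omega)] at this
          exact this
        have e2 : y (n - p) = y (n - p - q) := by
          have := hyq (n - p - q) (by omega)
          rw [Nat.sub_add_cancel (by omega)] at this
          exact this
        have e3 : x (n - p - q) = x (n - q) := by
          have := hxp (n - p - q) (by omega)
          have hrw : n - p - q + p = n - q := by omega
          rw [hrw] at this
          exact this.symm
        have e4 : y n = y (n - q) := by
          have := hyq (n - q) (by omega)
          rw [Nat.sub_add_cancel (by omega)] at this
          exact this
        have ih1 : x (n - p) = y (n - p) := ih (n - p) (by omega) (by omega)
        have ih2 : x (n - p - q) = y (n - p - q) := ih (n - p - q) (by omega) (by omega)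
        have ih3 : x (n - q) = y (n - q) := ih (n - q) (by omega) (by omega)
        rw [e1, ih1, e2, ← ih2, e3, ih3, ← e4]
  refine ⟨key, ?_⟩
  have hxq : SeqPeriod x q := by
    intro n hn
    rw [key (n + q) (by omega), hyq n hn, key n hn]
  exact seqPeriod_gcd x p q hxp hxq
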